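/- Let X' = (t',x') ∈ Q, and let R > 0 and 0 < t̄ < t' be such that the closure of B_t̄(X',R) is contained in Q and u(t,x) = min over y ∈ Ω of [(t − t̄) L((x − y)/(t − t̄)) + u(t̄, y)] for each (t,x) ∈ B_t̄(X',R). Then ⟨P₁ − P₂, X₁ − X₂⟩ ≤ 2 L(x₁ − x₂) for every X₁ = (t₁,x₁), X₂ = (t₂,x₂) ∈ B_t̄(X',R) and every P₁ ∈ D⁺v_t̄(X₁), P₂ ∈ D⁺v_t̄(X₂). -/

import Mathlib

open scoped RealInnerProductSpace
open Filter Topology Set Metric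

noncomputable section

/-- The Lagrangian `L(q) = ½ ⟨A⁻¹ q, q⟩`. -/
def Lag {n : ℕ} (A : Matrix (Fin n) (Fin n) ℝ) (q : EuclideanSpace ℝ (Fin n)) : ℝ :=
  (1 / 2) * ⟪Matrix.toEuclideanLin A⁻¹ q, q⟫

/-- The Hamiltonian `H(p) = ½ ⟨A p, p⟩`. -/
def Ham {n : ℕ} (A : Matrix (Fin n) (Fin n) ℝ) (p : EuclideanSpace ℝ (Fin n)) : ℝ :=
  (1 / 2) * ⟪Matrix.toEuclideanLin A p, p⟫

/-- Euclidean norm on `ℝ × ℝⁿ`. -/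
def pnorm {n : ℕ} (V : ℝ × EuclideanSpace ℝ (Fin n)) : ℝ :=
  Real.sqrt (V.1 ^ 2 + ‖V.2‖ ^ 2)

/-- Euclidean pairing on `ℝ × ℝⁿ`. -/
def pairR {n : ℕ} (P V : ℝ × EuclideanSpace ℝ (Fin n)) : ℝ :=
  P.1 * V.1 + ⟪P.2, V.2⟫

/-- Open Euclidean ball in `ℝ × ℝⁿ`. -/
def pball {n : ℕ} (X : ℝ × EuclideanSpace ℝ (Fin n)) (R : ℝ) :
    Set (ℝ × EuclideanSpace ℝ (Fin n)) :=
  {Y | pnorm (Y - X) < R}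

/-- `B_t̄(X,R) = ((t̄,∞) × ℝⁿ) ∩ B(X,R)`. -/
def tball {n : ℕ} (tbar : ℝ) (X : ℝ × EuclideanSpace ℝ (Fin n)) (R : ℝ) :
    Set (ℝ × EuclideanSpace ℝ (Fin n)) :=
  {Y | tbar < Y.1} ∩ pball X R

/-- Superdifferential of `w` at `X`:
`P ∈ D⁺w(X)` iff `limsup_{Y→X} (w(Y)−w(X)−⟨P,Y−X⟩)/|Y−X| ≤ 0`. -/
def superDiff {n : ℕ} (w : ℝ × EuclideanSpace ℝ (Fin n) → ℝ)
    (X P : ℝ × EuclideanSpace ℝ (Fin n)) : Prop :=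
  ∀ ε > 0, ∀ᶠ Y in 𝓝[≠] X, w Y - w X - pairR P (Y - X) ≤ ε * pnorm (Y - X)

lemma lag_smul {n : ℕ} (A : Matrix (Fin n) (Fin n) ℝ) (c : ℝ) (q : EuclideanSpace ℝ (Fin n)) :
    Lag A (c • q) = c ^ 2 * Lag A q := by
  simp only [Lag, map_smul, real_inner_smul_left, real_inner_smul_right]
  ring

lemma lag_neg {n : ℕ} (A : Matrix (Fin n) (Fin n) ℝ) (q : EuclideanSpace ℝ (Fin n)) :
    Lag A (-q) = Lag A q := by
  have := lag_smul A (-1) q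
  simpa using this

lemma inner_toEuc_symm {n : ℕ} {A : Matrix (Fin n) (Fin n) ℝ} (hA : A.PosDef)
    (a b : EuclideanSpace ℝ (Fin n)) :
    ⟪Matrix.toEuclideanLin A⁻¹ a, b⟫ = ⟪a, Matrix.toEuclideanLin A⁻¹ b⟫ :=
  (Matrix.isHermitian_iff_isSymmetric.mp hA.posSemidef.inv.isHermitian) a b

lemma lag_add {n : ℕ} {A : Matrix (Fin n) (Fin n) ℝ} (hA : A.PosDef)
    (a b : EuclideanSpace ℝ (Fin n)) :
    Lag A (a + b) = Lag A a + ⟪Matrix.toEuclideanLin A⁻¹ a, b⟫ + Lag A b := by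
  simp only [Lag, map_add, inner_add_left, inner_add_right]
  have h1 : ⟪Matrix.toEuclideanLin A⁻¹ b, a⟫ = ⟪Matrix.toEuclideanLin A⁻¹ a, b⟫ := by
    rw [inner_toEuc_symm hA, real_inner_comm]
  rw [h1]; ring

lemma lag_nonneg {n : ℕ} {A : Matrix (Fin n) (Fin n) ℝ} (hA : A.PosDef)
    (q : EuclideanSpace ℝ (Fin n)) : 0 ≤ Lag A q := by
  have h1 := (hA.posSemidef.inv).re_dotProduct_nonneg ((WithLp.equiv 2 _) q)
  have h2 : ⟪Matrix.toEuclideanLin A⁻¹ q, q⟫ =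
      RCLike.re (dotProduct (star ((WithLp.equiv 2 _) q)) (A⁻¹.mulVec ((WithLp.equiv 2 _) q))) := by
    rw [real_inner_comm, EuclideanSpace.inner_eq_star_dotProduct]
    simp
    exact dotProduct_comm _ _
  have : 0 ≤ ⟪Matrix.toEuclideanLin A⁻¹ q, q⟫ := by rw [h2]; exact h1
  unfold Lag; linarith

lemma pairR_smul {n : ℕ} (P : ℝ × EuclideanSpace ℝ (Fin n)) (c : ℝ)
    (V : ℝ × EuclideanSpace ℝ (Fin n)) : pairR P (c • V) = c * pairR P V := by
  simp only [pairR, Prod.smul_fst, Prod.smul_snd, smul_eq_mul, real_inner_smul_right]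
  ring

lemma pnorm_smul {n : ℕ} (c : ℝ) (V : ℝ × EuclideanSpace ℝ (Fin n)) :
    pnorm (c • V) = |c| * pnorm V := by
  simp only [pnorm, Prod.smul_fst, Prod.smul_snd, smul_eq_mul, norm_smul, Real.norm_eq_abs,
    mul_pow, sq_abs]
  rw [← mul_add, Real.sqrt_mul (sq_nonneg c), Real.sqrt_sq_eq_abs]

lemma pnorm_pos {n : ℕ} {V : ℝ × EuclideanSpace ℝ (Fin n)} (hV : V ≠ 0) : 0 < pnorm V := by
  rcases eq_or_ne V.1 0 with h1 | h1
  · have h2 : V.2 ≠ 0 := by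
      intro h2; exact hV (Prod.ext h1 h2)
    have := norm_pos_iff.mpr h2
    have : 0 < ‖V.2‖ ^ 2 := by nlinarith
    exact Real.sqrt_pos.mpr (by nlinarith [sq_nonneg V.1])
  · have : 0 < V.1 ^ 2 := by have := abs_pos.mpr h1; nlinarith [sq_abs V.1]
    exact Real.sqrt_pos.mpr (by nlinarith [sq_nonneg ‖V.2‖])

lemma isOpen_tball {n : ℕ} (tbar : ℝ) (X : ℝ × EuclideanSpace ℝ (Fin n)) (R : ℝ) :
    IsOpen (tball tbar X R) := by
  apply IsOpen.inter
  · exact isOpen_lt continuous_const continuous_fst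
  · have hc : Continuous fun Y : ℝ × EuclideanSpace ℝ (Fin n) => pnorm (Y - X) := by
      apply Real.continuous_sqrt.comp
      fun_prop
    exact isOpen_lt hc continuous_const

set_option maxHeartbeats 2000000 in
/-- Lemma 3.2: sharp monotonicity estimate for the superdifferential of
`v_t̄(t,x) = (t − t̄) u(t,x)`: `⟨P₁ − P₂, X₁ − X₂⟩ ≤ 2 L(x₁ − x₂)`. -/
theorem statement1
    {n : ℕ} (hn : 1 ≤ n)
    (Ω : Set (EuclideanSpace ℝ (Fin n))) (hΩo : IsOpen Ω)
    (hΩb : Bornology.IsBounded Ω)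
    (A : Matrix (Fin n) (Fin n) ℝ) (hA : A.PosDef)
    (Q : Set (ℝ × EuclideanSpace ℝ (Fin n))) (hQ : Q = Ioi (0 : ℝ) ×ˢ Ω)
    (φ u : ℝ × EuclideanSpace ℝ (Fin n) → ℝ)
    (hφ : ∃ K, LipschitzOnWith K φ (frontier Q))
    (hcomp : ∀ t x s y, (t, x) ∈ frontier Q → (s, y) ∈ frontier Q → 0 ≤ s → s < t →
      φ (t, x) - φ (s, y) ≤ (t - s) * Lag A ((t - s)⁻¹ • (x - y)))
    (hu : ∀ X ∈ closure Q, IsLeast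
      {v | ∃ s y, (s, y) ∈ frontier Q ∧ s < X.1 ∧
        v = (X.1 - s) * Lag A ((X.1 - s)⁻¹ • (X.2 - y)) + φ (s, y)} (u X))
    (t' : ℝ) (x' : EuclideanSpace ℝ (Fin n)) (hX' : (t', x') ∈ Q)
    (R : ℝ) (hR : 0 < R) (tbar : ℝ) (htbar0 : 0 < tbar) (htbar : tbar < t')
    (hcl : closure (tball tbar (t', x') R) ⊆ Q)
    (hmin : ∀ X ∈ tball tbar (t', x') R,
      IsLeast {v | ∃ y ∈ Ω,
        v = (X.1 - tbar) * Lag A ((X.1 - tbar)⁻¹ • (X.2 - y)) + u (tbar, y)} (u X))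
    (X₁ X₂ : ℝ × EuclideanSpace ℝ (Fin n))
    (h₁ : X₁ ∈ tball tbar (t', x') R) (h₂ : X₂ ∈ tball tbar (t', x') R)
    (P₁ P₂ : ℝ × EuclideanSpace ℝ (Fin n))
    (hP₁ : superDiff (fun X => (X.1 - tbar) * u X) X₁ P₁)
    (hP₂ : superDiff (fun X => (X.1 - tbar) * u X) X₂ P₂) :
    pairR (P₁ - P₂) (X₁ - X₂) ≤ 2 * Lag A (X₁.2 - X₂.2) := by
  by_cases hXeq : X₁ = X₂
  · subst hXeq
    have h0 : pairR (P₁ - P₂) (X₁ - X₁) = 0 := by simp [pairR]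
    have h1 : (0:ℝ) ≤ Lag A (X₁.2 - X₁.2) := lag_nonneg hA _
    rw [h0]; linarith
  -- homogenized representation of `(Z.1 - tbar) * u Z`
  have key : ∀ Z ∈ tball tbar (t', x') R, ∀ y ∈ Ω,
      (Z.1 - tbar) * u Z ≤ Lag A (Z.2 - y) + (Z.1 - tbar) * u (tbar, y) := by
    intro Z hZ y hy
    have hc : 0 < Z.1 - tbar := sub_pos.mpr hZ.1
    have hle : u Z ≤ (Z.1 - tbar) * Lag A ((Z.1 - tbar)⁻¹ • (Z.2 - y)) + u (tbar, y) :=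
      (hmin Z hZ).2 ⟨y, hy, rfl⟩
    have h2 : (Z.1 - tbar) * u Z ≤
        (Z.1 - tbar) * ((Z.1 - tbar) * Lag A ((Z.1 - tbar)⁻¹ • (Z.2 - y)) + u (tbar, y)) :=
      mul_le_mul_of_nonneg_left hle hc.le
    have h3 : (Z.1 - tbar) * ((Z.1 - tbar) * Lag A ((Z.1 - tbar)⁻¹ • (Z.2 - y)) + u (tbar, y))
        = Lag A (Z.2 - y) + (Z.1 - tbar) * u (tbar, y) := by
      rw [lag_smul]
      field_simp
    linarith [h3 ▸ h2]
  have exist : ∀ Z ∈ tball tbar (t', x') R, ∃ y ∈ Ω,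
      (Z.1 - tbar) * u Z = Lag A (Z.2 - y) + (Z.1 - tbar) * u (tbar, y) := by
    intro Z hZ
    have hc : 0 < Z.1 - tbar := sub_pos.mpr hZ.1
    obtain ⟨y, hy, hEq⟩ := (hmin Z hZ).1
    refine ⟨y, hy, ?_⟩
    rw [hEq, lag_smul]
    field_simp
  -- main estimate for every ε > 0
  have main : ∀ ε > 0, pairR (P₁ - P₂) (X₁ - X₂) ≤ 2 * Lag A (X₁.2 - X₂.2) + ε := by
    intro ε hε
    set Δ : ℝ × EuclideanSpace ℝ (Fin n) := X₂ - X₁ with hΔdef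
    have hΔne : Δ ≠ 0 := sub_ne_zero.mpr (Ne.symm hXeq)
    have hpΔ : 0 < pnorm Δ := pnorm_pos hΔne
    set ε' : ℝ := ε / (2 * pnorm Δ) with hε'def
    have hε' : 0 < ε' := by positivity
    have F₁ := hP₁ ε' hε'
    have F₂ := hP₂ ε' hε'
    -- the two curves
    have tendsto_curve : ∀ (X D : ℝ × EuclideanSpace ℝ (Fin n)), D ≠ 0 →
        Tendsto (fun h : ℝ => X + h • D) (𝓝[>] (0:ℝ)) (𝓝[≠] X) := by
      intro X D hD
      rw [tendsto_nhdsWithin_iff]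
      constructor
      · have hc : Continuous fun h : ℝ => X + h • D := by fun_prop
        have := hc.tendsto 0
        simp only [zero_smul, add_zero] at this
        exact this.mono_left nhdsWithin_le_nhds
      · filter_upwards [self_mem_nhdsWithin] with h hh
        simp only [mem_compl_iff, mem_singleton_iff]
        intro hcontra
        have : h • D = 0 := by
          have := congrArg (fun Y => Y - X) hcontra
          simpa using this
        rcases smul_eq_zero.mp this with h0 | h0
        · exact absurd h0 (ne_of_gt hh)
        · exact hD h0
    have ht1 := tendsto_curve X₁ Δ hΔne
    have ht2 := tendsto_curve X₂ (-Δ) (neg_ne_zero.mpr hΔne)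
    have ht1' : Tendsto (fun h : ℝ => X₁ + h • Δ) (𝓝[>] (0:ℝ)) (𝓝 X₁) :=
      ht1.mono_right nhdsWithin_le_nhds
    have ht2' : Tendsto (fun h : ℝ => X₂ + h • (-Δ)) (𝓝[>] (0:ℝ)) (𝓝 X₂) :=
      ht2.mono_right nhdsWithin_le_nhds
    have E1 := ht1.eventually F₁
    have E2 := ht2.eventually F₂
    have E3 := ht1'.eventually ((isOpen_tball tbar (t', x') R).eventually_mem h₁)
    have E4 := ht2'.eventually ((isOpen_tball tbar (t', x') R).eventually_mem h₂)
    have E5 : ∀ᶠ h : ℝ in 𝓝[>] (0:ℝ), 0 < h := self_mem_nhdsWithin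
    have E6 : ∀ᶠ h : ℝ in 𝓝[>] (0:ℝ), h < 1/2 := by
      have : ∀ᶠ h : ℝ in 𝓝 (0:ℝ), h < 1/2 := eventually_lt_nhds (by norm_num)
      exact this.filter_mono nhdsWithin_le_nhds
    obtain ⟨h, C1, C2, hZ1, hZ2, hh0, hh2⟩ :=
      (E1.and (E2.and (E3.and (E4.and (E5.and E6))))).exists
    set Z₁ : ℝ × EuclideanSpace ℝ (Fin n) := X₁ + h • Δ with hZ1def
    set Z₂ : ℝ × EuclideanSpace ℝ (Fin n) := X₂ + h • (-Δ) with hZ2def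
    -- minimizers at Z₁ and Z₂
    obtain ⟨y₁, hy₁, hw₁⟩ := exist Z₁ hZ1
    obtain ⟨y₂, hy₂, hw₂⟩ := exist Z₂ hZ2
    set m₁ : ℝ := u (tbar, y₁) with hm₁
    set m₂ : ℝ := u (tbar, y₂) with hm₂
    -- component identities
    have hZ1fst : Z₁.1 = X₁.1 + h * Δ.1 := by simp [hZ1def]
    have hZ2fst : Z₂.1 = X₂.1 - h * Δ.1 := by simp [hZ2def]; ring
    have hZ1snd : Z₁.2 = X₁.2 + h • Δ.2 := by simp [hZ1def]
    have hZ2snd : Z₂.2 = X₂.2 - h • Δ.2 := by simp [hZ2def]; module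
    have hΔ1 : Δ.1 = X₂.1 - X₁.1 := by simp [hΔdef]
    have hΔ2 : Δ.2 = X₂.2 - X₁.2 := by simp [hΔdef]
    -- superdifferential inequality at X₁
    have J₁ : ⟪(Matrix.toEuclideanLin A⁻¹) (X₁.2 - y₁), Δ.2⟫ + h * Lag A Δ.2 + Δ.1 * m₁
        ≤ pairR P₁ Δ + ε' * pnorm Δ := by
      have C := C1
      simp only at C
      have hvec : Z₁.2 - y₁ = (X₁.2 - y₁) + h • Δ.2 := by rw [hZ1snd]; module
      have hexp : Lag A (Z₁.2 - y₁)
          = Lag A (X₁.2 - y₁) + h * ⟪(Matrix.toEuclideanLin A⁻¹) (X₁.2 - y₁), Δ.2⟫ + h ^ 2 * Lag A Δ.2 := by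
        rw [hvec, lag_add hA, lag_smul, real_inner_smul_right]
      have hsub : Z₁ - X₁ = h • Δ := by rw [hZ1def]; abel
      have hpair : pairR P₁ (Z₁ - X₁) = h * pairR P₁ Δ := by rw [hsub, pairR_smul]
      have hpn : pnorm (Z₁ - X₁) = h * pnorm Δ := by
        rw [hsub, pnorm_smul, abs_of_pos hh0]
      have hkey := key X₁ h₁ y₁ hy₁
      rw [hw₁, hexp, hpair, hpn, hZ1fst] at C
      have step : h * (⟪(Matrix.toEuclideanLin A⁻¹) (X₁.2 - y₁), Δ.2⟫ + h * Lag A Δ.2 + Δ.1 * m₁)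
          ≤ h * (pairR P₁ Δ + ε' * pnorm Δ) := by nlinarith [C, hkey]
      exact le_of_mul_le_mul_left step hh0
    -- superdifferential inequality at X₂
    have J₂ : -⟪(Matrix.toEuclideanLin A⁻¹) (X₂.2 - y₂), Δ.2⟫ + h * Lag A Δ.2 - Δ.1 * m₂
        ≤ -pairR P₂ Δ + ε' * pnorm Δ := by
      have C := C2
      simp only at C
      have hvec : Z₂.2 - y₂ = (X₂.2 - y₂) + h • (-Δ.2) := by rw [hZ2snd]; module
      have hexp : Lag A (Z₂.2 - y₂)
          = Lag A (X₂.2 - y₂) - h * ⟪(Matrix.toEuclideanLin A⁻¹) (X₂.2 - y₂), Δ.2⟫ + h ^ 2 * Lag A Δ.2 := by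
        rw [hvec, lag_add hA, lag_smul, real_inner_smul_right, lag_neg, inner_neg_right]
        ring
      have hsub : Z₂ - X₂ = h • (-Δ) := by rw [hZ2def]; abel
      have hpair : pairR P₂ (Z₂ - X₂) = -(h * pairR P₂ Δ) := by
        rw [hsub, pairR_smul]
        have : pairR P₂ (-Δ) = -pairR P₂ Δ := by
          simp [pairR, inner_neg_right]; ring
        rw [this]; ring
      have hpn : pnorm (Z₂ - X₂) = h * pnorm Δ := by
        rw [hsub, pnorm_smul, abs_of_pos hh0]
        have : pnorm (-Δ) = pnorm Δ := by simp [pnorm]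
        rw [this]
      have hkey := key X₂ h₂ y₂ hy₂
      rw [hw₂, hexp, hpair, hpn, hZ2fst] at C
      have step : h * (-⟪(Matrix.toEuclideanLin A⁻¹) (X₂.2 - y₂), Δ.2⟫ + h * Lag A Δ.2 - Δ.1 * m₂)
          ≤ h * (-pairR P₂ Δ + ε' * pnorm Δ) := by nlinarith [C, hkey]
      exact le_of_mul_le_mul_left step hh0
    -- crossed optimality
    have K' : ⟪(Matrix.toEuclideanLin A⁻¹) Δ.2, y₁ - y₂⟫ ≤ Δ.1 * (m₁ - m₂) := by
      have cross1 : Lag A (Z₁.2 - y₁) + (Z₁.1 - tbar) * m₁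
          ≤ Lag A (Z₁.2 - y₂) + (Z₁.1 - tbar) * m₂ := by
        have := key Z₁ hZ1 y₂ hy₂
        rw [hw₁] at this; exact this
      have cross2 : Lag A (Z₂.2 - y₂) + (Z₂.1 - tbar) * m₂
          ≤ Lag A (Z₂.2 - y₁) + (Z₂.1 - tbar) * m₁ := by
        have := key Z₂ hZ2 y₁ hy₁
        rw [hw₂] at this; exact this
      have exp1 : Lag A (Z₁.2 - y₂)
          = Lag A (Z₁.2 - y₁) + ⟪(Matrix.toEuclideanLin A⁻¹) (Z₁.2 - y₁), y₁ - y₂⟫ + Lag A (y₁ - y₂) := by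
        have hv : Z₁.2 - y₂ = (Z₁.2 - y₁) + (y₁ - y₂) := by module
        rw [hv, lag_add hA]
      have exp2 : Lag A (Z₂.2 - y₁)
          = Lag A (Z₂.2 - y₂) - ⟪(Matrix.toEuclideanLin A⁻¹) (Z₂.2 - y₂), y₁ - y₂⟫ + Lag A (y₁ - y₂) := by
        have hv : Z₂.2 - y₁ = (Z₂.2 - y₂) + -(y₁ - y₂) := by module
        rw [hv, lag_add hA, lag_neg, inner_neg_right]; ring
      -- sum of crossed inequalities
      have sum : (Z₁.1 - Z₂.1) * (m₁ - m₂)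
          ≤ ⟪(Matrix.toEuclideanLin A⁻¹) (Z₁.2 - y₁) - (Matrix.toEuclideanLin A⁻¹) (Z₂.2 - y₂), y₁ - y₂⟫ + 2 * Lag A (y₁ - y₂) := by
        rw [inner_sub_left]
        nlinarith [cross1, cross2, exp1, exp2]
      have hBdiff : ⟪(Matrix.toEuclideanLin A⁻¹) (Z₁.2 - y₁) - (Matrix.toEuclideanLin A⁻¹) (Z₂.2 - y₂), y₁ - y₂⟫
          = ⟪(Matrix.toEuclideanLin A⁻¹) (Z₁.2 - Z₂.2), y₁ - y₂⟫ - 2 * Lag A (y₁ - y₂) := by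
        have h1 : (Matrix.toEuclideanLin A⁻¹) (Z₁.2 - y₁) - (Matrix.toEuclideanLin A⁻¹) (Z₂.2 - y₂) = (Matrix.toEuclideanLin A⁻¹) (Z₁.2 - Z₂.2) - (Matrix.toEuclideanLin A⁻¹) (y₁ - y₂) := by
          simp only [map_sub]; abel
        rw [h1, inner_sub_left, Lag]
        ring
      have hZdiff : Z₁.2 - Z₂.2 = (-(1 - 2*h)) • Δ.2 := by
        rw [hZ1snd, hZ2snd, hΔ2]; module
      have hZfstdiff : Z₁.1 - Z₂.1 = -(1 - 2*h) * Δ.1 := by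
        rw [hZ1fst, hZ2fst, hΔ1]; ring
      have hBZ : ⟪(Matrix.toEuclideanLin A⁻¹) (Z₁.2 - Z₂.2), y₁ - y₂⟫ = (-(1 - 2*h)) * ⟪(Matrix.toEuclideanLin A⁻¹) Δ.2, y₁ - y₂⟫ := by
        rw [hZdiff, map_smul, real_inner_smul_left]
      rw [hBdiff, hBZ, hZfstdiff] at sum
      -- sum : -(1-2h) * Δ.1 * (m₁ - m₂) ≤ -(1-2h) * ⟪(Matrix.toEuclideanLin A⁻¹) Δ.2, y₁-y₂⟫
      have h12 : 0 < 1 - 2*h := by linarith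
      have step : (1 - 2*h) * ⟪(Matrix.toEuclideanLin A⁻¹) Δ.2, y₁ - y₂⟫ ≤ (1 - 2*h) * (Δ.1 * (m₁ - m₂)) := by
        nlinarith [sum]
      exact le_of_mul_le_mul_left step h12
    -- assemble
    have eq1 : ⟪(Matrix.toEuclideanLin A⁻¹) (X₁.2 - y₁), Δ.2⟫ - ⟪(Matrix.toEuclideanLin A⁻¹) (X₂.2 - y₂), Δ.2⟫
        = ⟪(Matrix.toEuclideanLin A⁻¹) (X₁.2 - X₂.2), Δ.2⟫ - ⟪(Matrix.toEuclideanLin A⁻¹) (y₁ - y₂), Δ.2⟫ := by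
      rw [← inner_sub_left, ← inner_sub_left, ← map_sub, ← map_sub]
      congr 2
      abel
    have eq2 : ⟪(Matrix.toEuclideanLin A⁻¹) (y₁ - y₂), Δ.2⟫ = ⟪(Matrix.toEuclideanLin A⁻¹) Δ.2, y₁ - y₂⟫ := by
      rw [inner_toEuc_symm hA, real_inner_comm]
    have eq3 : ⟪(Matrix.toEuclideanLin A⁻¹) (X₁.2 - X₂.2), Δ.2⟫ = -(2 * Lag A (X₁.2 - X₂.2)) := by
      have hv : Δ.2 = -(X₁.2 - X₂.2) := by rw [hΔ2]; module
      rw [hv, inner_neg_right, Lag]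
      ring
    have eq4 : pairR (P₁ - P₂) (X₁ - X₂) = -(pairR P₁ Δ - pairR P₂ Δ) := by
      have hv : X₁ - X₂ = -Δ := by rw [hΔdef]; abel
      rw [hv]
      simp [pairR, inner_neg_right, inner_sub_left]
      ring
    have hLagΔ : 0 ≤ h * Lag A Δ.2 := mul_nonneg hh0.le (lag_nonneg hA _)
    have hεeq : 2 * (ε' * pnorm Δ) = ε := by
      have hne : pnorm Δ ≠ 0 := ne_of_gt hpΔ
      rw [hε'def]
      field_simp
    rw [eq4]
    linarith [J₁, J₂, K', eq1, eq2, eq3, hLagΔ, hεeq]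
  -- conclude
  by_contra hcon
  push_neg at hcon
  obtain ⟨ε, hε, hlt⟩ : ∃ ε > 0, 2 * Lag A (X₁.2 - X₂.2) + ε < pairR (P₁ - P₂) (X₁ - X₂) :=
    ⟨(pairR (P₁ - P₂) (X₁ - X₂) - 2 * Lag A (X₁.2 - X₂.2)) / 2, by linarith, by linarith⟩
  exact absurd (main ε hε) (not_le.mpr hlt)
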